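/- For every ε > 0 and every fixed positive integer k, there is a constant C = C(ε, k) such that every connected graph G on n vertices with minimum degree at least εn satisfies rx_k(G) ≤ C. -/

import Mathlib

open SimpleGraph

/-- An edge-coloring `c` is a `k`-rainbow coloring of `G` if every set of `k` vertices
is connected by a rainbow tree (here: a connected subgraph whose edges receive
pairwise distinct colors). -/
def IsKRainbowColoring {V : Type*} (G : SimpleGraph V) (k : ℕ) (c : Sym2 V → ℕ) : Prop :=
  ∀ S : Finset V, S.card = k →
    ∃ T : G.Subgraph, T.Connected ∧ ↑S ⊆ T.verts ∧ Set.InjOn c T.edgeSet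

/-- The `k`-rainbow index: minimum number of colors in a `k`-rainbow coloring. -/
noncomputable def rxk {V : Type*} (G : SimpleGraph V) (k : ℕ) : ℕ :=
  sInf {m | ∃ c : Sym2 V → ℕ, (∀ e ∈ G.edgeSet, c e < m) ∧ IsKRainbowColoring G k c}

namespace RXK

attribute [local instance] Classical.propDecidable

noncomputable section

variable {n : ℕ}

/-- label of a vertex -/
def lab (p : ℕ) (v : Fin n) : ℕ := v.val % p

/-- pair encoding -/
def pe (p a b : ℕ) : ℕ := min a b * p + max a b

lemma pe_lt {p a b : ℕ} (ha : a < p) (hb : b < p) : pe p a b < p * p + p := by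
  have h1 : min a b < p := lt_of_le_of_lt (min_le_left _ _) ha
  have h2 : max a b < p := by simp [max_lt_iff]; omega
  calc pe p a b = min a b * p + max a b := rfl
    _ < p * p + p := by
        have : min a b * p ≤ (p-1) * p := Nat.mul_le_mul_right _ (by omega)
        have hp : 0 < p := by omega
        nlinarith

lemma pe_inj {p a b b' : ℕ} (ha : a < p) (hb : b < p) (hb' : b' < p)
    (h : pe p a b = pe p a b') : b = b' := by
  unfold pe at h
  have h1 : max a b < p := max_lt ha hb
  have h2 : max a b' < p := max_lt ha hb'
  have e1 : (min a b * p + max a b) % p = max a b := by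
    rw [Nat.add_comm, Nat.add_mul_mod_self_right, Nat.mod_eq_of_lt h1]
  have e2 : (min a b' * p + max a b') % p = max a b' := by
    rw [Nat.add_comm, Nat.add_mul_mod_self_right, Nat.mod_eq_of_lt h2]
  have hmx : max a b = max a b' := by rw [← e1, ← e2, h]
  have hmn : min a b = min a b' := by
    have h3 : min a b * p = min a b' * p := by omega
    exact Nat.eq_of_mul_eq_mul_right (by omega) h3
  have m1 : min a b = a ∨ min a b = b := min_choice a b
  have m2 : min a b' = a ∨ min a b' = b' := min_choice a b'
  have M1 : max a b = a ∨ max a b = b := max_choice a b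
  have M2 : max a b' = a ∨ max a b' = b' := max_choice a b'
  have s1 : min a b + max a b = a + b := min_add_max a b
  have s2 : min a b' + max a b' = a + b' := min_add_max a b'
  omega

/-- the coloring -/
def colf (D : Finset (Fin n)) (L : List (Sym2 (Fin n))) (p : ℕ) : Sym2 (Fin n) → ℕ :=
  Sym2.lift ⟨fun u v =>
    if u ∈ D ∧ v ∈ D then 3 * L.idxOf s(u,v)
    else if u ∈ D then 3 * (D.toList.idxOf u * p + lab p v) + 1
    else if v ∈ D then 3 * (D.toList.idxOf v * p + lab p u) + 1
    else 3 * pe p (lab p u) (lab p v) + 2, by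
    intro u v
    by_cases hu : u ∈ D <;> by_cases hv : v ∈ D <;>
      simp [hu, hv, Sym2.eq_swap, pe, min_comm, max_comm]⟩

lemma colf_both {D : Finset (Fin n)} {L p} {u v : Fin n} (hu : u ∈ D) (hv : v ∈ D) :
    colf D L p s(u,v) = 3 * L.idxOf s(u,v) := by
  simp [colf, hu, hv]

lemma colf_one {D : Finset (Fin n)} {L p} {x t : Fin n} (hx : x ∉ D) (ht : t ∈ D) :
    colf D L p s(x,t) = 3 * (D.toList.idxOf t * p + lab p x) + 1 := by
  simp [colf, hx, ht]

lemma colf_none {D : Finset (Fin n)} {L p} {u v : Fin n} (hu : u ∉ D) (hv : v ∉ D) :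
    colf D L p s(u,v) = 3 * pe p (lab p u) (lab p v) + 2 := by
  simp [colf, hu, hv]

/-- Core structure: bounded connected backbone such that every outside vertex has many
neighbors that are adjacent to the backbone. -/
structure Core (q β : ℕ) (G : SimpleGraph (Fin n)) where
  D : Finset (Fin n)
  H : G.Subgraph
  hverts : H.verts = ↑D
  hconn : H.Connected
  L : List (Sym2 (Fin n))
  hL : ∀ e ∈ H.edgeSet, e ∈ L
  hLlen : L.length ≤ β
  hDcard : D.card ≤ β
  hB : ∀ s : Fin n, s ∉ D →
    10 * n ≤ 12 * q *
      ((G.neighborFinset s).filter (fun x => x ∉ D ∧ ∃ t ∈ D, G.Adj x t)).card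


section Build

variable {G : SimpleGraph (Fin n)}

lemma exists_M (q : ℕ) (hdeg : ∀ v : Fin n, n ≤ q * G.degree v) (hn : 1 ≤ n) :
    ∃ M : Finset (Fin n), M.Nonempty ∧ M.card ≤ q ∧
      ∀ v : Fin n, ∃ m ∈ M, ∃ w : G.Walk v m, w.length ≤ 2 := by
  classical
  set good : Finset (Fin n) → Prop := fun A =>
    ∀ u ∈ A, ∀ v ∈ A, u ≠ v → ¬G.Adj u v ∧ ∀ w, ¬(G.Adj u w ∧ G.Adj w v) with hgooddef
  set F := (Finset.univ : Finset (Fin n)).powerset.filter good with hFdef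
  have hne : F.Nonempty := ⟨∅, by simp [hFdef, hgooddef]⟩
  obtain ⟨M, hMF, hmax⟩ := F.exists_max_image (fun A => A.card) hne
  have hgood : good M := (Finset.mem_filter.mp hMF).2
  have hcover : ∀ v : Fin n, ∃ m ∈ M, v = m ∨ G.Adj v m ∨ ∃ w, G.Adj v w ∧ G.Adj w m := by
    intro v
    by_contra hc
    push_neg at hc
    have hvM : v ∉ M := by
      intro hv
      exact (hc v hv).1 rfl
    have hgood' : good (insert v M) := by
      intro u hu u' hu' hne'
      rcases Finset.mem_insert.mp hu with h1 | h1
      · rcases Finset.mem_insert.mp hu' with h2 | h2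
        · exact absurd (h1.trans h2.symm) hne'
        · subst h1
          obtain ⟨_, h4, h5⟩ := hc u' h2
          exact ⟨h4, fun w hw => h5 w hw.1 hw.2⟩
      · rcases Finset.mem_insert.mp hu' with h2 | h2
        · subst h2
          obtain ⟨_, h4, h5⟩ := hc u h1
          exact ⟨fun h => h4 h.symm, fun w hw => h5 w hw.2.symm hw.1.symm⟩
        · exact hgood u h1 u' h2 hne'
    have hmem : insert v M ∈ F := by
      simp only [hFdef, Finset.mem_filter, Finset.mem_powerset]
      exact ⟨Finset.subset_univ _, hgood'⟩
    have := hmax _ hmem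
    rw [Finset.card_insert_of_notMem hvM] at this
    omega
  have hMne : M.Nonempty := by
    obtain ⟨m, hm, _⟩ := hcover ⟨0, hn⟩
    exact ⟨m, hm⟩
  have hcard : M.card ≤ q := by
    set f : Fin n → Finset (Fin n) := fun m => insert m (G.neighborFinset m) with hfdef
    have hdisj : ∀ u ∈ M, ∀ v ∈ M, u ≠ v → Disjoint (f u) (f v) := by
      intro u hu v hv huv
      obtain ⟨hadj, hcom⟩ := hgood u hu v hv huv
      rw [Finset.disjoint_left]
      intro x hxu hxv
      rcases Finset.mem_insert.mp hxu with h1 | h1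
      · rcases Finset.mem_insert.mp hxv with h2 | h2
        · exact huv (h1.symm.trans h2)
        · rw [SimpleGraph.mem_neighborFinset] at h2
          subst h1
          exact hadj h2.symm
      · rcases Finset.mem_insert.mp hxv with h2 | h2
        · rw [SimpleGraph.mem_neighborFinset] at h1
          subst h2
          exact hadj h1
        · rw [SimpleGraph.mem_neighborFinset] at h1 h2
          exact hcom x ⟨h1, h2.symm⟩
    have hstep : M.card * n ≤ q * n := by
      calc M.card * n = ∑ _m ∈ M, n := by rw [Finset.sum_const, smul_eq_mul]
        _ ≤ ∑ m ∈ M, q * (f m).card := by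
            refine Finset.sum_le_sum fun m _ => ?_
            have h1 : (f m).card = G.degree m + 1 := by
              rw [hfdef]
              simp only []
              rw [Finset.card_insert_of_notMem (SimpleGraph.notMem_neighborFinset_self G m),
                SimpleGraph.card_neighborFinset_eq_degree]
            rw [h1]
            calc n ≤ q * G.degree m := hdeg m
              _ ≤ q * (G.degree m + 1) := Nat.mul_le_mul_left _ (Nat.le_succ _)
        _ = q * ∑ m ∈ M, (f m).card := by rw [Finset.mul_sum]
        _ = q * (M.biUnion f).card := by rw [Finset.card_biUnion hdisj]
        _ ≤ q * n := by
            refine Nat.mul_le_mul_left _ ?_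
            calc (M.biUnion f).card ≤ (Finset.univ : Finset (Fin n)).card :=
                Finset.card_le_univ _
              _ = n := by simp
    exact Nat.le_of_mul_le_mul_right hstep (by omega)
  refine ⟨M, hMne, hcard, ?_⟩
  intro v
  obtain ⟨m, hm, hcase⟩ := hcover v
  refine ⟨m, hm, ?_⟩
  rcases hcase with rfl | hadj | ⟨w, h1, h2⟩
  · exact ⟨SimpleGraph.Walk.nil, by simp⟩
  · exact ⟨SimpleGraph.Walk.cons hadj SimpleGraph.Walk.nil, by simp⟩
  · exact ⟨SimpleGraph.Walk.cons h1 (SimpleGraph.Walk.cons h2 SimpleGraph.Walk.nil), by simp⟩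

lemma grow (Hb : G.Subgraph) (Db : Finset (Fin n)) (Lb : List (Sym2 (Fin n)))
    (hvb : Hb.verts = ↑Db) (hcb : Hb.Connected) (hLb : ∀ e ∈ Hb.edgeSet, e ∈ Lb)
    (R : Finset (Fin n)) (wlen : ℕ)
    (hR : ∀ r ∈ R, ∃ t, t ∈ Db ∧ ∃ w : G.Walk r t, w.length ≤ wlen) :
    ∃ (H : G.Subgraph) (D : Finset (Fin n)) (L : List (Sym2 (Fin n))),
      Hb ≤ H ∧ H.Connected ∧ H.verts = ↑D ∧ (∀ e ∈ H.edgeSet, e ∈ L) ∧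
      Db ⊆ D ∧ R ⊆ D ∧ D.card ≤ Db.card + (wlen + 1) * R.card ∧
      L.length ≤ Lb.length + wlen * R.card := by
  classical
  revert hR
  induction R using Finset.induction_on with
  | empty =>
    intro _
    exact ⟨Hb, Db, Lb, le_rfl, hcb, hvb, hLb, subset_rfl, by simp, by simp, by simp⟩
  | @insert r R hr ih =>
    intro hR
    obtain ⟨H, D, L, hle, hc, hv, hLmem, hDsub, hRsub, hDcard, hLcard⟩ :=
      ih (fun r' hr' => hR r' (Finset.mem_insert_of_mem hr'))
    obtain ⟨t, ht, w, hw⟩ := hR r (Finset.mem_insert_self r R)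
    refine ⟨H ⊔ w.toSubgraph, D ∪ w.support.toFinset, L ++ w.edges, ?_, ?_, ?_, ?_, ?_, ?_, ?_, ?_⟩
    · exact le_trans hle le_sup_left
    · refine SimpleGraph.Subgraph.connected_sup hc.preconnected w.toSubgraph_connected.preconnected ⟨t, ?_⟩
      rw [SimpleGraph.Subgraph.verts_inf]
      exact ⟨by rw [hv]; exact_mod_cast hDsub ht, w.end_mem_verts_toSubgraph⟩
    · rw [SimpleGraph.Subgraph.verts_sup, hv, w.verts_toSubgraph]
      rw [Finset.coe_union, List.coe_toFinset]
    · intro e he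
      rw [SimpleGraph.Subgraph.edgeSet_sup] at he
      rcases he with he | he
      · exact List.mem_append_left _ (hLmem e he)
      · rw [w.edgeSet_toSubgraph] at he
        exact List.mem_append_right _ he
    · exact hDsub.trans Finset.subset_union_left
    · intro x hx
      rcases Finset.mem_insert.mp hx with rfl | hx
      · exact Finset.mem_union_right _ (by
          rw [List.mem_toFinset]
          exact w.start_mem_support)
      · exact Finset.mem_union_left _ (hRsub hx)
    · calc (D ∪ w.support.toFinset).card ≤ D.card + w.support.toFinset.card :=
          Finset.card_union_le _ _
        _ ≤ D.card + w.support.length := by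
            have := w.support.toFinset_card_le
            omega
        _ = D.card + (w.length + 1) := by rw [SimpleGraph.Walk.length_support]
        _ ≤ Db.card + (wlen + 1) * R.card + (wlen + 1) := by omega
        _ = Db.card + (wlen + 1) * (insert r R).card := by
            rw [Finset.card_insert_of_notMem hr]
            ring
    · calc (L ++ w.edges).length = L.length + w.edges.length := List.length_append
        _ = L.length + w.length := by rw [SimpleGraph.Walk.length_edges]
        _ ≤ Lb.length + wlen * R.card + wlen := by omega
        _ ≤ Lb.length + wlen * (insert r R).card := by
            rw [Finset.card_insert_of_notMem hr]
            ring_nf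
            omega

def auxQ (G : SimpleGraph (Fin n)) (M : Finset (Fin n)) : SimpleGraph {x : Fin n // x ∈ M} where
  Adj a b := a ≠ b ∧ ∃ w : G.Walk a.1 b.1, w.length ≤ 5
  symm := by
    constructor
    rintro a b ⟨hne, w, hw⟩
    exact ⟨hne.symm, w.reverse, by simpa using hw⟩
  loopless := by constructor; rintro a ⟨hne, _⟩; exact hne rfl

lemma backbone (q : ℕ) (hconn : G.Connected) (M : Finset (Fin n)) (hMne : M.Nonempty)
    (hMcard : M.card ≤ q)
    (anc : Fin n → Fin n) (hanc : ∀ v, anc v ∈ M ∧ ∃ w : G.Walk v (anc v), w.length ≤ 2) :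
    ∃ (H : G.Subgraph) (D : Finset (Fin n)) (L : List (Sym2 (Fin n))),
      H.Connected ∧ H.verts = ↑D ∧ (∀ e ∈ H.edgeSet, e ∈ L) ∧
      M ⊆ D ∧ D.card ≤ 1 + (5*q+1)*q ∧ L.length ≤ 5*q*q := by
  classical
  set Q := auxQ G M with hQ
  have hstep : ∀ (a b : {x : Fin n // x ∈ M}), (∃ w : G.Walk a.1 b.1, w.length ≤ 5) →
      Q.Reachable a b := by
    intro a b hw
    by_cases hab : a = b
    · subst hab; exact SimpleGraph.Reachable.refl _
    · exact SimpleGraph.Adj.reachable ⟨hab, hw⟩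
  have key : ∀ (u v : Fin n), G.Adj u v →
      Q.Reachable ⟨anc u, (hanc u).1⟩ ⟨anc v, (hanc v).1⟩ := by
    intro u v huv
    apply hstep
    obtain ⟨w1, hw1⟩ := (hanc u).2
    obtain ⟨w2, hw2⟩ := (hanc v).2
    refine ⟨w1.reverse.append (SimpleGraph.Walk.cons huv w2), ?_⟩
    rw [SimpleGraph.Walk.length_append, SimpleGraph.Walk.length_reverse]
    simp only [SimpleGraph.Walk.length_cons]
    omega
  have KEY : ∀ (u v : Fin n) (w : G.Walk u v),
      Q.Reachable ⟨anc u, (hanc u).1⟩ ⟨anc v, (hanc v).1⟩ := by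
    intro u v w
    induction w with
    | nil => exact SimpleGraph.Reachable.refl _
    | cons h p ih => exact (key _ _ h).trans ih
  have hpre : ∀ (a b : {x : Fin n // x ∈ M}), Q.Reachable a b := by
    intro a b
    have h1 : Q.Reachable a ⟨anc a.1, (hanc a.1).1⟩ := by
      apply hstep
      obtain ⟨w, hw⟩ := (hanc a.1).2
      exact ⟨w, by omega⟩
    have h2 : Q.Reachable b ⟨anc b.1, (hanc b.1).1⟩ := by
      apply hstep
      obtain ⟨w, hw⟩ := (hanc b.1).2
      exact ⟨w, by omega⟩
    obtain ⟨wab⟩ := hconn.preconnected a.1 b.1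
    exact h1.trans ((KEY _ _ wab).trans h2.symm)
  obtain ⟨m0, hm0⟩ := hMne
  have hwalks : ∀ m ∈ M, ∃ wgm : G.Walk m m0, wgm.length ≤ 5 * q := by
    intro m hm
    obtain ⟨wq⟩ := hpre ⟨m, hm⟩ ⟨m0, hm0⟩
    have hp := wq.bypass_isPath
    have hlen : wq.bypass.length < Fintype.card {x : Fin n // x ∈ M} := hp.length_lt
    have hcard : Fintype.card {x : Fin n // x ∈ M} = M.card := Fintype.card_coe M
    have expand : ∀ (a b : {x : Fin n // x ∈ M}) (wq' : Q.Walk a b),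
        ∃ w : G.Walk a.1 b.1, w.length ≤ 5 * wq'.length := by
      intro a b wq'
      induction wq' with
      | nil => exact ⟨SimpleGraph.Walk.nil, by simp⟩
      | cons h p ih =>
        obtain ⟨w1, hw1⟩ := h.2
        obtain ⟨w2, hw2⟩ := ih
        refine ⟨w1.append w2, ?_⟩
        rw [SimpleGraph.Walk.length_append, SimpleGraph.Walk.length_cons]
        omega
    obtain ⟨w, hwlen⟩ := expand _ _ wq.bypass
    refine ⟨w, ?_⟩
    have : wq.bypass.length ≤ M.card - 1 := by omega
    have hMq : M.card ≤ q := hMcard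
    have hM1 : 1 ≤ M.card := Finset.card_pos.mpr ⟨m0, hm0⟩
    calc w.length ≤ 5 * wq.bypass.length := hwlen
      _ ≤ 5 * (M.card - 1) := by omega
      _ ≤ 5 * q := by omega
  have hsv : (G.singletonSubgraph m0).verts = ↑({m0} : Finset (Fin n)) := by
    simp
  have hse : ∀ e ∈ (G.singletonSubgraph m0).edgeSet, e ∈ ([] : List (Sym2 (Fin n))) := by
    intro e he
    rw [SimpleGraph.edgeSet_singletonSubgraph] at he
    exact absurd he (Set.notMem_empty e)
  obtain ⟨H, D, L, _, hc, hv, hL, _, hMsub, hDcard, hLcard⟩ :=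
    grow (G := G) _ {m0} [] hsv SimpleGraph.Subgraph.singletonSubgraph_connected hse M (5*q)
      (fun m hm => ⟨m0, Finset.mem_singleton_self m0, hwalks m hm⟩)
  refine ⟨H, D, L, hc, hv, hL, hMsub, ?_, ?_⟩
  · calc D.card ≤ ({m0} : Finset (Fin n)).card + (5*q+1) * M.card := hDcard
      _ ≤ 1 + (5*q+1)*q := by
        rw [Finset.card_singleton]
        exact Nat.add_le_add_left (Nat.mul_le_mul_left _ hMcard) 1
  · calc L.length ≤ ([] : List (Sym2 (Fin n))).length + (5*q) * M.card := hLcard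
      _ ≤ 5*q*q := by
        simp only [List.length_nil, Nat.zero_add]
        exact Nat.mul_le_mul_left _ hMcard

lemma greedy (q : ℕ) (hn : 1 ≤ n) (W : Fin n → Finset (Fin n))
    (hW : ∀ s, W s ⊆ G.neighborFinset s) :
    ∃ R U : Finset (Fin n), (∀ x ∈ U, ∃ r ∈ R, G.Adj x r) ∧ R.card * n ≤ 24*q*U.card ∧
      ∀ s : Fin n, n ≤ 12*q*(W s).card → 24*q*((W s) \ U).card < n := by
  classical
  set Inv : Finset (Fin n) × Finset (Fin n) → Prop := fun RU =>
    (∀ x ∈ RU.2, ∃ r ∈ RU.1, G.Adj x r) ∧ RU.1.card * n ≤ 24*q*RU.2.card with hInv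
  set F := ((Finset.univ : Finset (Fin n)).powerset ×ˢ
    (Finset.univ : Finset (Fin n)).powerset).filter Inv with hF
  have hne : F.Nonempty := by
    refine ⟨(∅, ∅), Finset.mem_filter.mpr ⟨?_, ?_, ?_⟩⟩
    · simp
    · intro x hx; simp at hx
    · simp
  obtain ⟨RU, hmem, hmax⟩ := F.exists_max_image (fun RU => RU.2.card) hne
  obtain ⟨R, U⟩ := RU
  have hInvRU : Inv (R, U) := (Finset.mem_filter.mp hmem).2
  refine ⟨R, U, hInvRU.1, hInvRU.2, ?_⟩
  intro s hbig
  by_contra hcon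
  push_neg at hcon
  have hdisj : Disjoint U ((W s) \ U) := Finset.disjoint_sdiff
  have hucard : (U ∪ ((W s) \ U)).card = U.card + ((W s) \ U).card :=
    Finset.card_union_of_disjoint hdisj
  have hpos : 0 < ((W s) \ U).card := by
    by_contra h0
    push_neg at h0
    interval_cases h : ((W s) \ U).card
    · omega
  have hnewmem : (insert s R, U ∪ ((W s) \ U)) ∈ F := by
    refine Finset.mem_filter.mpr ⟨?_, ?_, ?_⟩
    · simp
    · intro x hx
      rcases Finset.mem_union.mp hx with hx | hx
      · obtain ⟨r, hr, ha⟩ := hInvRU.1 x hx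
        exact ⟨r, Finset.mem_insert_of_mem hr, ha⟩
      · refine ⟨s, Finset.mem_insert_self _ _, ?_⟩
        have h1 := hW s (Finset.mem_sdiff.mp hx).1
        exact ((SimpleGraph.mem_neighborFinset G s x).mp h1).symm
    · simp only [hucard]
      calc (insert s R).card * n ≤ (R.card + 1) * n := by
            exact Nat.mul_le_mul_right _ (Finset.card_insert_le _ _)
        _ = R.card * n + n := by ring
        _ ≤ 24*q*U.card + 24*q*((W s) \ U).card := Nat.add_le_add hInvRU.2 hcon
        _ = 24*q*(U.card + ((W s) \ U).card) := by ring
  have hle := hmax _ hnewmem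
  simp only [hucard] at hle
  omega


lemma core_exists (q k : ℕ) (hq : 1 ≤ q) (hconn : G.Connected)
    (hdeg : ∀ v : Fin n, n ≤ q * G.degree v) (hn : 2400 * (k+1) * (q*q*q) ≤ n) :
    Nonempty (Core q (200*q*q) G) := by
  classical
  have hn1 : 1 ≤ n := by
    have h0 : 0 < 2400 * (k+1) * (q*q*q) := by positivity
    omega
  obtain ⟨M, hMne, hMcard, hMcover⟩ := exists_M q hdeg hn1
  choose anc hanc using hMcover
  obtain ⟨H0, D0, L0, hc0, hv0, hL0, hMsub, hD0card, hL0card⟩ :=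
    backbone q hconn M hMne hMcard anc hanc
  set cl : Finset (Fin n) := D0 ∪ D0.biUnion (fun d => G.neighborFinset d) with hcl
  set W : Fin n → Finset (Fin n) := fun s => (G.neighborFinset s).filter (fun x => x ∉ cl)
    with hWdef
  obtain ⟨R, U, hRU, hRcard, hfinal⟩ := greedy q hn1 W (fun s => Finset.filter_subset _ _)
  have hRcard' : R.card ≤ 24*q := by
    have hU : U.card ≤ n := by
      calc U.card ≤ (Finset.univ : Finset (Fin n)).card := Finset.card_le_univ _
        _ = n := by simp
    have h1 : R.card * n ≤ (24*q) * n :=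
      le_trans hRcard (Nat.mul_le_mul_left _ hU)
    exact Nat.le_of_mul_le_mul_right h1 (by omega)
  obtain ⟨H, D, L, hle, hc, hv, hL, hD0sub, hRsub, hDcard, hLcard⟩ :=
    grow H0 D0 L0 hv0 hc0 hL0 R 2 (fun r _ => ⟨anc r, hMsub (hanc r).1, (hanc r).2⟩)
  have hDcard' : D.card ≤ 200*q*q := by
    calc D.card ≤ D0.card + 3 * R.card := hDcard
      _ ≤ (1 + (5*q+1)*q) + 3*(24*q) := by
          have := hD0card
          have := hRcard'
          omega
      _ ≤ 200*q*q := by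
          have hqq : q ≤ q*q := Nat.le_mul_of_pos_left q (by omega)
          have h1q : 1 ≤ q*q := by omega
          nlinarith
  have hLlen' : L.length ≤ 200*q*q := by
    calc L.length ≤ L0.length + 2 * R.card := hLcard
      _ ≤ 5*q*q + 2*(24*q) := by
          have := hL0card
          have := hRcard'
          omega
      _ ≤ 200*q*q := by
          have hqq : q ≤ q*q := Nat.le_mul_of_pos_left q (by omega)
          have h1q : 1 ≤ q*q := by omega
          nlinarith
  refine ⟨Core.mk D H hv hc L hL hLlen' hDcard' ?_⟩
  intro s hs
  set NB := G.neighborFinset s with hNB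
  set B0 := NB.filter (fun x => x ∈ D) with hB0
  set B1 := NB.filter (fun x => x ∉ D ∧ ∃ t ∈ D, G.Adj x t) with hB1
  set B2 := NB.filter (fun x => x ∉ D ∧ ¬∃ t ∈ D, G.Adj x t) with hB2
  have hpart : B0.card + B1.card + B2.card = G.degree s := by
    have p1 : B0.card + (NB.filter (fun x => ¬ x ∈ D)).card = NB.card :=
      Finset.card_filter_add_card_filter_not (fun x => x ∈ D)
    have p2 : ((NB.filter (fun x => ¬ x ∈ D)).filter (fun x => ∃ t ∈ D, G.Adj x t)).card
        + ((NB.filter (fun x => ¬ x ∈ D)).filter (fun x => ¬ ∃ t ∈ D, G.Adj x t)).card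
        = (NB.filter (fun x => ¬ x ∈ D)).card :=
      Finset.card_filter_add_card_filter_not (fun x => ∃ t ∈ D, G.Adj x t)
    have e1 : (NB.filter (fun x => ¬ x ∈ D)).filter (fun x => ∃ t ∈ D, G.Adj x t) = B1 := by
      rw [Finset.filter_filter]
    have e2 : (NB.filter (fun x => ¬ x ∈ D)).filter (fun x => ¬ ∃ t ∈ D, G.Adj x t) = B2 := by
      rw [Finset.filter_filter]
    rw [e1, e2] at p2
    have e3 : NB.card = G.degree s := SimpleGraph.card_neighborFinset_eq_degree G s
    omega
  have hB2W : B2 ⊆ (W s) \ U := by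
    intro x hx
    have hmem := Finset.mem_filter.mp hx
    have hxNB := hmem.1
    have hxD := hmem.2.1
    have hxT := hmem.2.2
    rw [Finset.mem_sdiff]
    constructor
    · rw [hWdef]
      simp only [Finset.mem_filter]
      refine ⟨hxNB, ?_⟩
      rw [hcl]
      simp only [Finset.mem_union, Finset.mem_biUnion, not_or, not_exists]
      constructor
      · intro hxD0
        exact hxD (hD0sub hxD0)
      · push_neg
        intro d hd hxd
        rw [SimpleGraph.mem_neighborFinset] at hxd
        exact hxT ⟨d, hD0sub hd, hxd.symm⟩
    · intro hxU
      obtain ⟨r, hr, ha⟩ := hRU x hxU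
      exact hxT ⟨r, hRsub hr, ha⟩
  have h12 : 12*q*B2.card ≤ n := by
    by_cases hbig : n ≤ 12*q*(W s).card
    · have h1 := hfinal s hbig
      have h2 : B2.card ≤ ((W s) \ U).card := Finset.card_le_card hB2W
      have h3 : 24*q*B2.card ≤ 24*q*((W s) \ U).card := Nat.mul_le_mul_left _ h2
      have h4 : 12*q*B2.card ≤ 24*q*B2.card := Nat.mul_le_mul_right _ (by omega)
      omega
    · push_neg at hbig
      have h2 : B2.card ≤ (W s).card :=
        Finset.card_le_card (hB2W.trans (Finset.sdiff_subset))
      have h3 : 12*q*B2.card ≤ 12*q*(W s).card := Nat.mul_le_mul_left _ h2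
      omega
  have h10 : 12*q*B0.card ≤ n := by
    have h1 : B0.card ≤ D.card := by
      refine Finset.card_le_card ?_
      intro x hx
      exact (Finset.mem_filter.mp hx).2
    have h2 : 12*q*B0.card ≤ 12*q*(200*q*q) := by
      refine Nat.mul_le_mul_left _ (le_trans h1 hDcard')
    have h3 : 12*q*(200*q*q) ≤ 2400 * (k+1) * (q*q*q) := by
      have e : 12*q*(200*q*q) = 2400*(q*q*q) := by ring
      rw [e]
      have : (2400) * (q*q*q) ≤ (2400*(k+1)) * (q*q*q) :=
        Nat.mul_le_mul_right _ (by omega)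
      linarith
    omega
  have e1 : 12 * n ≤ 12*(q*G.degree s) := Nat.mul_le_mul_left 12 (hdeg s)
  have e2 : 12*(q * G.degree s) = 12*q*B0.card + 12*q*B1.card + 12*q*B2.card := by
    rw [← hpart]
    ring
  have egoal : 10 * n ≤ 12 * q * B1.card := by omega
  exact egoal

lemma lab_lt {p : ℕ} (hp : 1 ≤ p) (v : Fin n) : lab p v < p := Nat.mod_lt _ (by omega)

lemma lab_class_card (p j : ℕ) (hp : 1 ≤ p) :
    ((Finset.univ : Finset (Fin n)).filter (fun x => lab p x = j)).card ≤ n / p + 1 := by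
  classical
  have h := Finset.card_le_card_of_injOn (f := fun x : Fin n => x.val / p)
    (s := (Finset.univ : Finset (Fin n)).filter (fun x => lab p x = j))
    (t := Finset.range (n/p + 1)) ?_ ?_
  · simpa using h
  · intro x _
    simp only [Finset.mem_range]
    have hx : x.val < n := x.2
    have h2 : x.val / p ≤ n / p := Nat.div_le_div_right (le_of_lt hx)
    simp only [Finset.mem_coe, Finset.mem_range, Finset.coe_range, Set.mem_Iio]
    omega
  · intro x hx y hy hxy
    have hx' : x.val % p = j := by
      have := (Finset.mem_filter.mp hx).2
      simpa [lab] using this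
    have hy' : y.val % p = j := by
      have := (Finset.mem_filter.mp hy).2
      simpa [lab] using this
    have hxy' : x.val / p = y.val / p := by simpa using hxy
    apply Fin.ext
    rw [← Nat.div_add_mod x.val p, ← Nat.div_add_mod y.val p, hx', hy', hxy']

lemma card_level (p : ℕ) (hp : 1 ≤ p) (S : Finset (Fin n))
    (hS : ∀ x ∈ S, ∀ y ∈ S, lab p x = lab p y) : S.card ≤ n / p + 1 := by
  classical
  rcases S.eq_empty_or_nonempty with rfl | ⟨x0, hx0⟩
  · simp
  · have hsub : S ⊆ (Finset.univ : Finset (Fin n)).filter (fun x => lab p x = lab p x0) := by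
      intro x hx
      exact Finset.mem_filter.mpr ⟨Finset.mem_univ _, hS x hx x0 hx0⟩
    exact le_trans (Finset.card_le_card hsub) (lab_class_card p _ hp)

lemma router (q β p k : ℕ) (C : Core q β G) (hq : 1 ≤ q)
    (hp : p = 144 * q * (k+1)) (hnp : p ≤ n)
    (s : Fin n) (hs : s ∉ C.D) (blocked : Finset ℕ) (hb : blocked.card ≤ 2*k + 2) :
    ∃ x t : Fin n, G.Adj s x ∧ G.Adj x t ∧ t ∈ C.D ∧ x ∉ C.D ∧
      colf C.D C.L p s(s,x) ∉ blocked ∧ colf C.D C.L p s(x,t) ∉ blocked := by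
  classical
  have hp1 : 1 ≤ p := by
    rw [hp]
    have h0 : 0 < 144*q*(k+1) := by positivity
    omega
  set A := (G.neighborFinset s).filter (fun x => x ∉ C.D ∧ ∃ t ∈ C.D, G.Adj x t) with hA
  have hAcard : 10 * n ≤ 12 * q * A.card := C.hB s hs
  set tf : Fin n → Fin n := fun x =>
    if h : ∃ t, t ∈ C.D ∧ G.Adj x t then h.choose else x with htf
  have htfspec : ∀ x ∈ A, tf x ∈ C.D ∧ G.Adj x (tf x) := by
    intro x hx
    have hex : ∃ t, t ∈ C.D ∧ G.Adj x t := by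
      obtain ⟨t, ht1, ht2⟩ := (Finset.mem_filter.mp hx).2.2
      exact ⟨t, ht1, ht2⟩
    rw [htf]
    simp only [hex, dif_pos]
    exact hex.choose_spec
  set c := colf C.D C.L p with hc
  set killed := A.filter (fun x => c s(s,x) ∈ blocked ∨ c s(x, tf x) ∈ blocked) with hkilled
  have hxnotD : ∀ x ∈ A, x ∉ C.D := fun x hx => (Finset.mem_filter.mp hx).2.1
  have hkb : killed.card ≤ blocked.card * (2 * (n/p + 1)) := by
    have hsub : killed ⊆ blocked.biUnion (fun b =>
        A.filter (fun x => c s(s,x) = b) ∪ A.filter (fun x => c s(x, tf x) = b)) := by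
      intro x hx
      obtain ⟨hxA, hor⟩ := Finset.mem_filter.mp hx
      rcases hor with h | h
      · exact Finset.mem_biUnion.mpr ⟨_, h, Finset.mem_union_left _
          (Finset.mem_filter.mpr ⟨hxA, rfl⟩)⟩
      · exact Finset.mem_biUnion.mpr ⟨_, h, Finset.mem_union_right _
          (Finset.mem_filter.mpr ⟨hxA, rfl⟩)⟩
    refine le_trans (Finset.card_le_card hsub) (le_trans Finset.card_biUnion_le ?_)
    have hper : ∀ b ∈ blocked,
        (A.filter (fun x => c s(s,x) = b) ∪ A.filter (fun x => c s(x, tf x) = b)).card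
          ≤ 2*(n/p + 1) := by
      intro b _
      refine le_trans (Finset.card_union_le _ _) ?_
      have h1 : (A.filter (fun x => c s(s,x) = b)).card ≤ n/p + 1 := by
        refine card_level p hp1 _ ?_
        intro x hx y hy
        obtain ⟨hxA, hxb⟩ := Finset.mem_filter.mp hx
        obtain ⟨hyA, hyb⟩ := Finset.mem_filter.mp hy
        rw [hc, colf_none hs (hxnotD x hxA)] at hxb
        rw [hc, colf_none hs (hxnotD y hyA)] at hyb
        have hpe : pe p (lab p s) (lab p x) = pe p (lab p s) (lab p y) := by omega
        exact pe_inj (lab_lt hp1 s) (lab_lt hp1 x) (lab_lt hp1 y) hpe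
      have h2 : (A.filter (fun x => c s(x, tf x) = b)).card ≤ n/p + 1 := by
        refine card_level p hp1 _ ?_
        intro x hx y hy
        obtain ⟨hxA, hxb⟩ := Finset.mem_filter.mp hx
        obtain ⟨hyA, hyb⟩ := Finset.mem_filter.mp hy
        obtain ⟨htx, _⟩ := htfspec x hxA
        obtain ⟨hty, _⟩ := htfspec y hyA
        rw [hc, colf_one (hxnotD x hxA) htx] at hxb
        rw [hc, colf_one (hxnotD y hyA) hty] at hyb
        have heq : C.D.toList.idxOf (tf x) * p + lab p x
            = C.D.toList.idxOf (tf y) * p + lab p y := by omega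
        have h1' : lab p x < p := lab_lt hp1 x
        have h2' : lab p y < p := lab_lt hp1 y
        have e1 : (C.D.toList.idxOf (tf x) * p + lab p x) % p = lab p x := by
          rw [Nat.add_comm, Nat.add_mul_mod_self_right, Nat.mod_eq_of_lt h1']
        have e2 : (C.D.toList.idxOf (tf y) * p + lab p y) % p = lab p y := by
          rw [Nat.add_comm, Nat.add_mul_mod_self_right, Nat.mod_eq_of_lt h2']
        rw [← e1, ← e2, heq]
      omega
    calc (∑ b ∈ blocked,
        (A.filter (fun x => c s(s,x) = b) ∪ A.filter (fun x => c s(x, tf x) = b)).card)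
        ≤ ∑ _b ∈ blocked, 2*(n/p + 1) := Finset.sum_le_sum hper
      _ = blocked.card * (2*(n/p + 1)) := by rw [Finset.sum_const, smul_eq_mul]
  have hlt : killed.card < A.card := by
    have hKp : 3 * (48*q*(k+1)) = p := by rw [hp]; ring
    have hstep1 : killed.card ≤ (2*k+2) * (2*(n/p+1)) :=
      le_trans hkb (Nat.mul_le_mul_right _ hb)
    have key : 3*(12*q*killed.card) ≤ 2 * n := by
      calc 3*(12*q*killed.card)
          ≤ 3*(12*q*((2*k+2) * (2*(n/p+1)))) :=
            Nat.mul_le_mul_left 3 (Nat.mul_le_mul_left (12*q) hstep1)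
        _ = (3*(48*q*(k+1))) * (n/p) + 3*(48*q*(k+1)) := by ring
        _ = p * (n/p) + p := by rw [hKp]
        _ ≤ n + n := by
            refine Nat.add_le_add ?_ hnp
            rw [Nat.mul_comm]
            exact Nat.div_mul_le_self n p
        _ = 2*n := by ring
    by_contra hcon
    push_neg at hcon
    have hmul : 12*q*A.card ≤ 12*q*killed.card := Nat.mul_le_mul_left _ hcon
    have h30 : 30 * n ≤ 3*(12*q*A.card) := by linarith
    have hnpos : 1 ≤ n := le_trans hp1 hnp
    linarith
  have hex : ∃ x ∈ A, x ∉ killed := by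
    by_contra hcon
    push_neg at hcon
    have : A ⊆ killed := fun x hx => hcon x hx
    have := Finset.card_le_card this
    omega
  obtain ⟨x, hxA, hxk⟩ := hex
  have hnk : ¬(c s(s,x) ∈ blocked ∨ c s(x, tf x) ∈ blocked) := by
    intro h
    exact hxk (Finset.mem_filter.mpr ⟨hxA, h⟩)
  push_neg at hnk
  obtain ⟨htx, hax⟩ := htfspec x hxA
  refine ⟨x, tf x, ?_, hax, htx, hxnotD x hxA, hnk.1, hnk.2⟩
  exact (SimpleGraph.mem_neighborFinset G s x).mp (Finset.mem_filter.mp hxA).1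

lemma colf_H_edge {q β : ℕ} (C : Core q β G) (p : ℕ) :
    ∀ e ∈ C.H.edgeSet, colf C.D C.L p e = 3 * C.L.idxOf e := by
  intro e
  induction e using Sym2.ind with
  | _ u v =>
    intro he
    rw [SimpleGraph.Subgraph.mem_edgeSet] at he
    have hu : u ∈ C.D := by
      have := C.H.edge_vert he
      rw [C.hverts] at this
      exact_mod_cast this
    have hv : v ∈ C.D := by
      have := C.H.edge_vert he.symm
      rw [C.hverts] at this
      exact_mod_cast this
    exact colf_both hu hv

lemma injOn_H {q β : ℕ} (C : Core q β G) (p : ℕ) :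
    Set.InjOn (colf C.D C.L p) C.H.edgeSet := by
  intro e he e' he' heq
  rw [colf_H_edge C p e he, colf_H_edge C p e' he'] at heq
  have h3 : C.L.idxOf e = C.L.idxOf e' := by omega
  exact (List.idxOf_inj (C.hL e he)).mp h3

lemma colf_lt {q β : ℕ} (C : Core q β G) (p : ℕ) (hp1 : 1 ≤ p) (hβ : C.D.card ≤ β) :
    ∀ e : Sym2 (Fin n), colf C.D C.L p e < 3*(β*p + p*p + β + p) + 3 := by
  intro e
  induction e using Sym2.ind with
  | _ u v =>
    by_cases hu : u ∈ C.D <;> by_cases hv : v ∈ C.D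
    · rw [colf_both hu hv]
      have h1 : C.L.idxOf s(u,v) ≤ C.L.length := List.idxOf_le_length
      have h2 := C.hLlen
      nlinarith [Nat.zero_le (β*p), Nat.zero_le (p*p), Nat.zero_le p]
    · rw [Sym2.eq_swap, colf_one hv hu]
      have h1 : C.D.toList.idxOf u < C.D.toList.length :=
        List.idxOf_lt_length_iff.mpr (Finset.mem_toList.mpr hu)
      rw [Finset.length_toList] at h1
      have h2 : lab p v < p := lab_lt hp1 v
      have h3 : C.D.toList.idxOf u * p ≤ (β-1) * p := by
        refine Nat.mul_le_mul_right _ ?_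
        omega
      nlinarith [Nat.zero_le (p*p), hp1]
    · rw [colf_one hu hv]
      have h1 : C.D.toList.idxOf v < C.D.toList.length :=
        List.idxOf_lt_length_iff.mpr (Finset.mem_toList.mpr hv)
      rw [Finset.length_toList] at h1
      have h2 : lab p u < p := lab_lt hp1 u
      have h3 : C.D.toList.idxOf v * p ≤ (β-1) * p := by
        refine Nat.mul_le_mul_right _ ?_
        omega
      nlinarith [Nat.zero_le (p*p), hp1]
    · rw [colf_none hu hv]
      have h1 : pe p (lab p u) (lab p v) < p*p + p := pe_lt (lab_lt hp1 u) (lab_lt hp1 v)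
      nlinarith [Nat.zero_le (β*p), Nat.zero_le β]

lemma attach {q β p k : ℕ} (C : Core q β G) (hq : 1 ≤ q) (hp : p = 144*q*(k+1))
    (hnp : p ≤ n) :
    ∀ l : List (Fin n), l.length ≤ k →
    ∃ (T : G.Subgraph) (E : Finset (Sym2 (Fin n))),
      C.H ≤ T ∧ T.Connected ∧ (∀ v ∈ l, v ∈ T.verts) ∧
      T.edgeSet = C.H.edgeSet ∪ ↑E ∧ E.card ≤ 2 * l.length ∧
      (∀ e ∈ E, ¬ (3 ∣ colf C.D C.L p e)) ∧
      Set.InjOn (colf C.D C.L p) T.edgeSet := by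
  classical
  intro l
  induction l with
  | nil =>
    intro _
    refine ⟨C.H, ∅, le_rfl, C.hconn, by simp, by simp, by simp, by simp, injOn_H C p⟩
  | cons s l ih =>
    intro hlen
    obtain ⟨T, E, hle, hTconn, hmem, hedge, hcard, hEmod, hinj⟩ :=
      ih (by simp only [List.length_cons] at hlen; omega)
    by_cases hsv : s ∈ T.verts
    · refine ⟨T, E, hle, hTconn, ?_, hedge, ?_, hEmod, hinj⟩
      · intro v hv
        rcases List.mem_cons.mp hv with rfl | hv
        · exact hsv
        · exact hmem v hv
      · simp only [List.length_cons]
        omega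
    · have hsD : s ∉ C.D := by
        intro h
        refine hsv (SimpleGraph.Subgraph.verts_mono hle ?_)
        rw [C.hverts]
        exact_mod_cast h
      set blocked := E.image (colf C.D C.L p) with hbl
      have hbc : blocked.card ≤ 2*k + 2 := by
        refine le_trans Finset.card_image_le ?_
        simp only [List.length_cons] at hlen
        omega
      obtain ⟨x, t, hsx, hxt, htD, hxD, hc1, hc2⟩ :=
        router q β p k C hq hp hnp s hsD blocked hbc
      have htT : t ∈ T.verts := by
        refine SimpleGraph.Subgraph.verts_mono hle ?_
        rw [C.hverts]
        exact_mod_cast htD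
      have hval1 : colf C.D C.L p s(s,x) % 3 = 2 := by
        rw [colf_none hsD hxD]; omega
      have hval2 : colf C.D C.L p s(x,t) % 3 = 1 := by
        rw [colf_one hxD htD]; omega
      have hne12 : s(s,x) ≠ s(x,t) := by
        intro h
        have := congrArg (fun e => colf C.D C.L p e % 3) h
        simp only [hval1, hval2] at this
        omega
      have hHmod : ∀ e ∈ C.H.edgeSet, colf C.D C.L p e % 3 = 0 := by
        intro e he
        rw [colf_H_edge C p e he]
        omega
      -- key distinctness: old edges vs new edges
      have hdistinct : ∀ e ∈ T.edgeSet,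
          colf C.D C.L p e ≠ colf C.D C.L p s(s,x) ∧
          colf C.D C.L p e ≠ colf C.D C.L p s(x,t) := by
        intro e he
        rw [hedge] at he
        rcases he with he | he
        · constructor
          · intro h
            have := hHmod e he
            omega
          · intro h
            have := hHmod e he
            omega
        · have heE : e ∈ E := by exact_mod_cast he
          have hmemb : colf C.D C.L p e ∈ blocked := by
            rw [hbl]
            exact Finset.mem_image_of_mem _ heE
          constructor
          · intro h
            rw [h] at hmemb
            exact hc1 hmemb
          · intro h
            rw [h] at hmemb
            exact hc2 hmemb
      set T' := T ⊔ G.subgraphOfAdj hxt ⊔ G.subgraphOfAdj hsx with hT'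
      have hT'edge : T'.edgeSet = T.edgeSet ∪ {s(x,t)} ∪ {s(s,x)} := by
        rw [hT', SimpleGraph.Subgraph.edgeSet_sup, SimpleGraph.Subgraph.edgeSet_sup,
          SimpleGraph.edgeSet_subgraphOfAdj, SimpleGraph.edgeSet_subgraphOfAdj]
      refine ⟨T', insert s(s,x) (insert s(x,t) E), ?_, ?_, ?_, ?_, ?_, ?_, ?_⟩
      · exact le_trans hle (le_trans le_sup_left le_sup_left)
      · refine SimpleGraph.Subgraph.connected_sup (SimpleGraph.Subgraph.Connected.preconnected ?_) (SimpleGraph.Subgraph.subgraphOfAdj_connected hsx).preconnected ?_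
        · refine SimpleGraph.Subgraph.connected_sup hTconn.preconnected (SimpleGraph.Subgraph.subgraphOfAdj_connected hxt).preconnected ⟨t, ?_⟩
          rw [SimpleGraph.Subgraph.verts_inf]
          refine ⟨htT, ?_⟩
          simp
        · refine ⟨x, ?_⟩
          rw [SimpleGraph.Subgraph.verts_inf]
          constructor
          · rw [SimpleGraph.Subgraph.verts_sup]
            right
            simp
          · simp
      · intro v hv
        rcases List.mem_cons.mp hv with rfl | hv
        · rw [hT', SimpleGraph.Subgraph.verts_sup]
          right
          simp
        · rw [hT', SimpleGraph.Subgraph.verts_sup]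
          left
          rw [SimpleGraph.Subgraph.verts_sup]
          left
          exact hmem v hv
      · rw [hT'edge, hedge]
        ext e
        simp only [Set.mem_union, Set.mem_singleton_iff, Finset.coe_insert, Set.mem_insert_iff,
          Finset.mem_coe, Finset.mem_insert]
        tauto
      · have h1 : (insert s(s,x) (insert s(x,t) E)).card ≤ E.card + 2 := by
          refine le_trans (Finset.card_insert_le _ _) ?_
          have := Finset.card_insert_le s(x,t) E
          omega
        simp only [List.length_cons]
        omega
      · intro e he
        rcases Finset.mem_insert.mp he with rfl | he
        · intro hdvd
          omega
        · rcases Finset.mem_insert.mp he with rfl | he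
          · intro hdvd
            omega
          · exact hEmod e he
      · -- InjOn
        intro e he e' he' heq
        rw [hT'edge] at he he'
        rcases he with (he | he) | he <;> rcases he' with (he' | he') | he'
        · exact hinj he he' heq
        · rw [Set.mem_singleton_iff] at he'
          subst he'
          exact absurd heq (hdistinct e he).2
        · rw [Set.mem_singleton_iff] at he'
          subst he'
          exact absurd heq (hdistinct e he).1
        · rw [Set.mem_singleton_iff] at he
          subst he
          exact absurd heq.symm (hdistinct e' he').2
        · rw [Set.mem_singleton_iff] at he he'
          rw [he, he']
        · rw [Set.mem_singleton_iff] at he he'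
          subst he
          subst he'
          exact absurd heq (by intro h; rw [← h] at hval1; omega)
        · rw [Set.mem_singleton_iff] at he
          subst he
          exact absurd heq.symm (hdistinct e' he').1
        · rw [Set.mem_singleton_iff] at he he'
          subst he
          subst he'
          exact absurd heq (by intro h; rw [h] at hval1; omega)
        · rw [Set.mem_singleton_iff] at he he'
          rw [he, he']

lemma big_rainbow {q β p k : ℕ} (C : Core q β G) (hq : 1 ≤ q) (hp : p = 144*q*(k+1))
    (hnp : p ≤ n) : IsKRainbowColoring G k (colf C.D C.L p) := by
  intro S hS
  obtain ⟨T, E, hle, hconn, hmem, _, _, _, hinj⟩ :=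
    attach C hq hp hnp S.toList (by rw [Finset.length_toList, hS])
  refine ⟨T, hconn, ?_, hinj⟩
  intro v hv
  exact hmem v (Finset.mem_toList.mpr (by exact_mod_cast hv))

lemma small_rainbow (hconn : G.Connected) : rxk G k ≤ n*n + n := by
  classical
  set c : Sym2 (Fin n) → ℕ := Sym2.lift ⟨fun u v => pe n u.val v.val, by
    intro u v
    simp [pe, min_comm, max_comm]⟩ with hcdef
  have hcinj : Function.Injective c := by
    intro e e'
    induction e using Sym2.ind with
    | _ u v =>
      induction e' using Sym2.ind with
      | _ u' v' =>
        intro h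
        rw [hcdef, Sym2.lift_mk, Sym2.lift_mk] at h
        have hn1 : 0 < n := Fin.pos u
        have h' : min u.val v.val * n + max u.val v.val
            = min u'.val v'.val * n + max u'.val v'.val := h
        have h1 : max u.val v.val < n := max_lt u.2 v.2
        have h2 : max u'.val v'.val < n := max_lt u'.2 v'.2
        have e1 : (min u.val v.val * n + max u.val v.val) % n = max u.val v.val := by
          rw [Nat.add_comm, Nat.add_mul_mod_self_right, Nat.mod_eq_of_lt h1]
        have e2 : (min u'.val v'.val * n + max u'.val v'.val) % n = max u'.val v'.val := by
          rw [Nat.add_comm, Nat.add_mul_mod_self_right, Nat.mod_eq_of_lt h2]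
        have hmx : max u.val v.val = max u'.val v'.val := by rw [← e1, ← e2, h']
        have hmn : min u.val v.val = min u'.val v'.val := by
          have h3 : min u.val v.val * n = min u'.val v'.val * n := by omega
          exact Nat.eq_of_mul_eq_mul_right hn1 h3
        have m1 := min_choice u.val v.val
        have m2 := min_choice u'.val v'.val
        have M1 := max_choice u.val v.val
        have M2 := max_choice u'.val v'.val
        have s1 := min_add_max u.val v.val
        have s2 := min_add_max u'.val v'.val
        have hcases : (u.val = u'.val ∧ v.val = v'.val) ∨ (u.val = v'.val ∧ v.val = u'.val) := by
          omega
        rw [Sym2.eq_iff]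
        rcases hcases with ⟨ha, hb⟩ | ⟨ha, hb⟩
        · exact Or.inl ⟨Fin.ext ha, Fin.ext hb⟩
        · exact Or.inr ⟨Fin.ext ha, Fin.ext hb⟩
  apply Nat.sInf_le
  refine ⟨c, ?_, ?_⟩
  · intro e _
    induction e using Sym2.ind with
    | _ u v =>
      rw [hcdef, Sym2.lift_mk]
      have hn1 : 0 < n := Fin.pos u
      have := pe_lt (p := n) u.2 v.2
      show pe n u.val v.val < n*n + n
      omega
  · intro S hS
    refine ⟨⊤, ?_, ?_, ?_⟩
    · rw [SimpleGraph.Subgraph.connected_iff']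
      exact (SimpleGraph.Subgraph.topIso).connected_iff.mpr hconn
    · rw [SimpleGraph.Subgraph.verts_top]
      exact Set.subset_univ _
    · exact fun e _ e' _ h => hcinj h

end Build

end

end RXK

open RXK in
theorem stmt15 (ε : ℝ) (hε : 0 < ε) (k : ℕ) (hk : 1 ≤ k) :
    ∃ C : ℕ, ∀ (n : ℕ) (G : SimpleGraph (Fin n)), G.Connected →
      (∀ v, ε * n ≤ ((G.neighborSet v).ncard : ℝ)) →
      rxk G k ≤ C := by
  classical
  set q : ℕ := ⌈ε⁻¹⌉₊ with hqdef
  have hq : 1 ≤ q := Nat.one_le_iff_ne_zero.mpr (by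
    have : (0:ℝ) < ε⁻¹ := inv_pos.mpr hε
    simp only [hqdef]
    positivity)
  set β : ℕ := 200*q*q with hβdef
  set p : ℕ := 144*q*(k+1) with hpdef
  set n0 : ℕ := 2400*(k+1)*(q*q*q) with hn0def
  have hpn0 : p ≤ n0 := by
    rw [hpdef, hn0def]
    have h1 : q ≤ q*(q*q) := Nat.le_mul_of_pos_right q (by positivity)
    nlinarith
  refine ⟨3*(β*p+p*p+β+p)+3 + (n0*n0 + n0), ?_⟩
  intro n G hconn hdeg
  by_cases hbig : n0 ≤ n
  · -- big case
    have hdeg' : ∀ v : Fin n, n ≤ q * G.degree v := by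
      intro v
      have hncard : ((G.neighborSet v).ncard : ℝ) = (G.degree v : ℝ) := by
        norm_cast
        rw [Set.ncard_eq_toFinset_card', Set.toFinset_card]
        exact SimpleGraph.card_neighborSet_eq_degree G v
      have h1 : (ε⁻¹ : ℝ) ≤ (q : ℝ) := by
        rw [hqdef]
        exact Nat.le_ceil _
      have h2 : (n : ℝ) ≤ (q : ℝ) * (G.degree v : ℝ) := by
        have h3 := hdeg v
        rw [hncard] at h3
        calc (n : ℝ) = ε⁻¹ * (ε * n) := by
              field_simp
          _ ≤ (q : ℝ) * (ε * n) := by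
              refine mul_le_mul_of_nonneg_right h1 ?_
              positivity
          _ ≤ (q : ℝ) * (G.degree v) := by
              refine mul_le_mul_of_nonneg_left h3 ?_
              positivity
      exact_mod_cast h2
    obtain ⟨C⟩ := core_exists q k hq hconn hdeg' (by rw [← hn0def]; exact hbig)
    have hp1 : 1 ≤ p := by
      rw [hpdef]
      have : 0 < 144*q*(k+1) := by positivity
      omega
    have hrb : IsKRainbowColoring G k (colf C.D C.L p) :=
      big_rainbow C hq hpdef (le_trans hpn0 hbig)
    have hle : rxk G k ≤ 3*(β*p+p*p+β+p)+3 := by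
      apply Nat.sInf_le
      exact ⟨colf C.D C.L p, fun e _ => colf_lt C p hp1 C.hDcard e, hrb⟩
    omega
  · push_neg at hbig
    have h1 : rxk G k ≤ n*n + n := small_rainbow hconn
    have h2 : n*n + n ≤ n0*n0 + n0 := by
      have h3 : n ≤ n0 := le_of_lt hbig
      have h4 : n*n ≤ n0*n0 := Nat.mul_le_mul h3 h3
      omega
    omega
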